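/- If |y| ≤ |t|/2 and |t| ≤ 1/4, then for z = t + iy, |1 − z²/2| ≤ 1 − t²/3. -/

import Mathlib

/-- If `|y| ≤ |t|/2` and `|t| ≤ 1/4`, then for `z = t + iy`, `|1 − z²/2| ≤ 1 − t²/3`. -/
theorem stmt_9 (t y : ℝ) (hy : |y| ≤ |t| / 2) (ht : |t| ≤ 1 / 4) :
    ‖1 - ((t : ℂ) + y * Complex.I) ^ 2 / 2‖ ≤ 1 - t ^ 2 / 3 := by
  have ht2 : t ^ 2 ≤ (1/4)^2 := by
    rw [← sq_abs t]; exact pow_le_pow_left₀ (abs_nonneg t) ht 2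
  have hy2 : y ^ 2 ≤ t ^ 2 / 4 := by
    have := pow_le_pow_left₀ (abs_nonneg y) hy 2
    rw [sq_abs, div_pow, sq_abs] at this; linarith
  have hc : (0:ℝ) ≤ 1 - t ^ 2 / 3 := by nlinarith
  rw [← Real.sqrt_sq hc, Complex.norm_def]
  apply Real.sqrt_le_sqrt
  have hre : (1 - ((t : ℂ) + y * Complex.I) ^ 2 / 2).re = 1 - (t^2 - y^2)/2 := by
    simp [Complex.ext_iff, Complex.add_re, pow_two]
  have him : (1 - ((t : ℂ) + y * Complex.I) ^ 2 / 2).im = -(t*y) := by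
    simp [Complex.ext_iff, pow_two]
    ring
  rw [Complex.normSq_apply, hre, him]
  nlinarith [sq_nonneg t, sq_nonneg y, sq_nonneg (t*y), sq_nonneg (t^2 - y^2)]
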